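/- Let M be a simplicial complex and D ≤ M a combinatorial d-ball that can be r-starred in M, and let M̃ be the complex obtained from M by this r-starring (replacing the simplices of D not in ∂D by a cone w∂D on a new vertex w). Then M and M̃ are both subcomplexes of N = M ∪ wD, and N is obtained from M̃ by an elementary PL expansion of dimension d+1: N = M̃ ∪ wD where wD is a combinatorial (d+1)-ball and M̃ ∩ wD = w∂D is a combinatorial d-ball. -/

import Mathlib

open Finset
open scoped Classical

/-- An abstract simplicial complex on vertex type `V`: a downward-closed family of
nonempty finite subsets of `V`. -/
structure SComplex (V : Type*) where
  faces : Set (Finset V)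
  not_empty_mem : ∅ ∉ faces
  down_closed : ∀ {s t : Finset V}, s ∈ faces → t ⊆ s → t.Nonempty → t ∈ faces

namespace SComplex

variable {V W : Type*}

/-- The vertex set of a simplicial complex. -/
def vertexSet (K : SComplex V) : Set V := {v | {v} ∈ K.faces}

/-- The geometric realization of a simplicial complex, as the set of convex-combination
coordinate functions supported on a simplex. -/
def realization (K : SComplex V) : Set (V → ℝ) :=
  {x | ∃ σ ∈ K.faces, (∀ v, 0 ≤ x v) ∧ (∀ v, v ∉ σ → x v = 0) ∧ (∑ v ∈ σ, x v) = 1}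

/-- The geometric realization as a topological space. -/
abbrev space (K : SComplex V) : Type _ := ↥(K.realization)

/-- `L` is a subcomplex of `K`. -/
def IsSubcomplex (L K : SComplex V) : Prop := L.faces ⊆ K.faces

/-- A complex is `r`-conic (`r` an integer, possibly `-1`) if every subcomplex with at
most `r` vertices is contained in the closed star of some vertex. -/
def IsConic (K : SComplex V) (r : ℤ) : Prop :=
  ∀ L : SComplex V, L.IsSubcomplex K → L.vertexSet.Finite →
    (L.vertexSet.ncard : ℤ) ≤ r →
    ∃ v ∈ K.vertexSet, ∀ σ ∈ L.faces, insert v σ ∈ K.faces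

/-- The link of a vertex `v` in `K`. -/
def vertexLink (K : SComplex V) (v : V) : Set (Finset V) :=
  {τ ∈ K.faces | v ∉ τ ∧ insert v τ ∈ K.faces}

/-- A nonempty complex is `r`-ample if for every set `U` of at most `r` vertices and
every subcomplex `L` with vertices in `U`, some vertex `v` has a link whose simplices
contained in `U` are exactly those of `L`. -/
def IsAmple (K : SComplex V) (r : ℕ) : Prop :=
  K.faces.Nonempty ∧
  ∀ U : Finset V, ↑U ⊆ K.vertexSet → U.card ≤ r →
    ∀ L : SComplex V, L.IsSubcomplex K → L.vertexSet ⊆ ↑U →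
      ∃ v ∈ K.vertexSet, {τ ∈ K.vertexLink v | ↑τ ⊆ (U : Set V)} = L.faces

end SComplex

/-- A topological space is `n`-connected if it is nonempty and every continuous map
from the `k`-sphere, `0 ≤ k ≤ n`, is null-homotopic. -/
def NConnected (n : ℕ) (X : Type*) [TopologicalSpace X] : Prop :=
  Nonempty X ∧ ∀ k : ℕ, k ≤ n →
    ∀ f : C(Metric.sphere (0 : EuclideanSpace ℝ (Fin (k + 1))) 1, X),
      f.Nullhomotopic

namespace SComplex

variable {V W : Type*}

/-- The affine extension of a vertex assignment `φ : W → (V → ℝ)` to barycentric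
coordinate functions. -/
noncomputable def affMap (φ : W → V → ℝ) (x : W → ℝ) : V → ℝ :=
  fun v => ∑ᶠ w, x w * φ w v

/-- The closed geometric simplex of `K` spanned by the vertices of `σ`. -/
def geomSimplex (K : SComplex V) (σ : Finset V) : Set (V → ℝ) :=
  {x ∈ K.realization | ∀ v, v ∉ σ → x v = 0}

/-- `L` is a (geometric) subdivision of `K` via the vertex placement `φ`: the affine
extension of `φ` maps `|L|` bijectively onto `|K|` and maps each closed simplex of `L`
into a closed simplex of `K`. -/
def IsSubdivisionVia (L : SComplex W) (φ : W → V → ℝ) (K : SComplex V) : Prop :=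
  Set.BijOn (affMap φ) L.realization K.realization ∧
  ∀ σ ∈ L.faces, ∃ τ ∈ K.faces, affMap φ '' L.geomSimplex σ ⊆ K.geomSimplex τ

/-- `f` realizes a simplicial isomorphism from `K` onto `L`. -/
def IsIsoMap (f : V → W) (K : SComplex V) (L : SComplex W) : Prop :=
  Set.InjOn f K.vertexSet ∧
  (∀ σ ∈ K.faces, σ.image f ∈ L.faces) ∧
  (∀ τ ∈ L.faces, ∃ σ ∈ K.faces, σ.image f = τ)

/-- Two simplicial complexes are isomorphic. -/
def Iso (K : SComplex V) (L : SComplex W) : Prop :=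
  ∃ f : V → W, IsIsoMap f K L

/-- Two simplicial complexes are PL homeomorphic if they admit simplicially isomorphic
subdivisions. -/
def PLHomeo (K : SComplex V) (L : SComplex W) : Prop :=
  ∃ (A B : Type) (K' : SComplex A) (L' : SComplex B)
    (φ : A → V → ℝ) (ψ : B → W → ℝ),
      IsSubdivisionVia K' φ K ∧ IsSubdivisionVia L' ψ L ∧ Iso K' L'

end SComplex

/-- The standard `n`-simplex as a simplicial complex: all nonempty subsets of
`Fin (n+1)`. -/
def stdSimplexC (n : ℕ) : SComplex (Fin (n + 1)) where
  faces := {σ | σ.Nonempty}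
  not_empty_mem := by simp [Set.mem_setOf_eq]
  down_closed := fun _ _ h => h

/-- The boundary of the standard simplex on `Fin j`: all nonempty proper subsets.
For `j = m + 2` this is the combinatorial `m`-sphere `∂Δ^{m+1}`; for `j = 1` it is the
empty complex (the `(-1)`-sphere). -/
def boundaryC (j : ℕ) : SComplex (Fin j) where
  faces := {σ | σ.Nonempty ∧ σ ≠ Finset.univ}
  not_empty_mem := by
    rintro ⟨h, -⟩; exact Finset.not_nonempty_empty h
  down_closed := by
    rintro s t ⟨-, hs⟩ hts ht
    refine ⟨ht, fun h => hs ?_⟩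
    subst h
    exact Finset.univ_subset_iff.mp hts

namespace SComplex

variable {V : Type*}

/-- A combinatorial `d`-ball: a complex PL homeomorphic to the standard `d`-simplex. -/
def IsCombBall (d : ℕ) (K : SComplex V) : Prop := K.PLHomeo (stdSimplexC d)

/-- A complex PL homeomorphic to `∂Δ^{j-1}`, i.e. a combinatorial `(j-2)`-sphere. -/
def IsCombSphereAux (j : ℕ) (K : SComplex V) : Prop := K.PLHomeo (boundaryC j)

/-- The link of a simplex `σ` in `K`, as a simplicial complex. -/
def linkC (K : SComplex V) (σ : Finset V) : SComplex V where
  faces := {τ | τ ∈ K.faces ∧ (∀ v ∈ σ, v ∉ τ) ∧ τ ∪ σ ∈ K.faces}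
  not_empty_mem := fun h => K.not_empty_mem h.1
  down_closed := by
    rintro s t ⟨hs, hdisj, huni⟩ hts ht
    refine ⟨K.down_closed hs hts ht, fun v hv hvt => hdisj v hv (hts hvt), ?_⟩
    refine K.down_closed huni (Finset.union_subset_union_left hts) ?_
    exact ht.mono Finset.subset_union_left

/-- A combinatorial (PL) `n`-manifold: the link of every simplex `σ` is a combinatorial
sphere of dimension `n - dim σ - 1` (PL homeomorphic to the boundary of the standard
`(n - dim σ)`-simplex). -/
def IsCombManifold (n : ℕ) (M : SComplex V) : Prop :=
  M.faces.Nonempty ∧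
  ∀ σ ∈ M.faces, (M.linkC σ).IsCombSphereAux (n + 2 - σ.card)

/-- `(D, bD)` is a triangulated `d`-disk: there is a homeomorphism from `|D|` to the
closed unit `d`-ball carrying `|bD|` exactly onto the boundary sphere. -/
def IsTriangulatedDisk (D bD : SComplex V) (d : ℕ) : Prop :=
  bD.IsSubcomplex D ∧
  ∃ e : D.space ≃ₜ (Metric.closedBall (0 : EuclideanSpace ℝ (Fin d)) 1),
    ∀ x : D.space, (x : V → ℝ) ∈ bD.realization ↔
      ((e x : EuclideanSpace ℝ (Fin d)) ∈
        Metric.sphere (0 : EuclideanSpace ℝ (Fin d)) 1)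

/-- The faces of the cone with apex `w` over the family of faces `F`. -/
def coneFaces (w : V) (F : Set (Finset V)) : Set (Finset V) :=
  F ∪ (insert w '' F) ∪ {{w}}

/-- `Mt` is obtained from `M` by starring the triangulated `d`-disk `D` (with boundary
`bD`) at the new vertex `w`: all simplices of `D` not in `bD` are removed and the cone
`w ∂D` is attached. -/
def IsStarringAt (r : ℤ) (M Mt : SComplex V) (D bD : SComplex V) (d : ℕ) (w : V) :
    Prop :=
  D.IsSubcomplex M ∧
  D.vertexSet.Finite ∧ (D.vertexSet.ncard : ℤ) ≤ r ∧
  IsTriangulatedDisk D bD d ∧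
  (∀ σ ∈ M.faces, ∀ τ ∈ D.faces, τ ∉ bD.faces → τ ⊆ σ → σ ∈ D.faces) ∧
  w ∉ M.vertexSet ∧
  Mt.faces = (M.faces \ {τ | τ ∈ D.faces ∧ τ ∉ bD.faces}) ∪ coneFaces w bD.faces

/-- `Mt` is obtained from `M` by an `r`-starring. -/
def IsStarring (r : ℤ) (M Mt : SComplex V) : Prop :=
  ∃ (D bD : SComplex V) (d : ℕ) (w : V), IsStarringAt r M Mt D bD d w

/-- `M` `r`-stars to `L`: `L` is obtained from `M` by a finite sequence of
`r`-starrings. -/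
def StarsTo (r : ℤ) : SComplex V → SComplex V → Prop :=
  Relation.ReflTransGen (IsStarring r)

end SComplex

namespace SComplex

variable {V : Type*}

/-- The cone with apex `w` over the complex `A`, as a simplicial complex. -/
def coneC (w : V) (A : SComplex V) : SComplex V where
  faces := coneFaces w A.faces
  not_empty_mem := by
    rintro ((h | ⟨τ, hτ, h⟩) | h)
    · exact A.not_empty_mem h
    · exact (Finset.insert_ne_empty w τ) h
    · simp only [Set.mem_singleton_iff] at h
      exact (Finset.singleton_ne_empty w) h.symm
  down_closed := by
    rintro s t ((hs | ⟨τ, hτ, rfl⟩) | hs) hts ht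
    · exact Or.inl (Or.inl (A.down_closed hs hts ht))
    · rcases Finset.eq_empty_or_nonempty (t.erase w) with he | he
      · have : t ⊆ {w} := by
          intro x hx
          rcases eq_or_ne x w with rfl | hxw
          · exact Finset.mem_singleton_self x
          · exact absurd (Finset.mem_erase.mpr ⟨hxw, hx⟩) (by simp [he])
        rcases Finset.subset_singleton_iff.mp this with rfl | rfl
        · exact absurd rfl ht.ne_empty
        · exact Or.inr rfl
      · have htτ : t.erase w ⊆ τ := by
          intro x hx
          have hx' := Finset.mem_erase.mp hx
          rcases Finset.mem_insert.mp (hts hx'.2) with h | h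
          · exact absurd h hx'.1
          · exact h
        have hA : t.erase w ∈ A.faces := A.down_closed hτ htτ he
        by_cases hw : w ∈ t
        · exact Or.inl (Or.inr ⟨t.erase w, hA, Finset.insert_erase hw⟩)
        · rw [Finset.erase_eq_self.mpr hw] at hA
          exact Or.inl (Or.inl hA)
    · simp only [Set.mem_singleton_iff] at hs
      subst hs
      rcases Finset.subset_singleton_iff.mp hts with rfl | rfl
      · exact absurd rfl ht.ne_empty
      · exact Or.inr rfl

end SComplex

/-! ### Auxiliary development for the proof -/

attribute [local instance 9999] Classical.propDecidable

namespace SComplex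

variable {V V' A B W : Type*}

/-- Pushforward of a coordinate function along an injection. -/
noncomputable def pushJ (j : V → V') (x : V → ℝ) : V' → ℝ :=
  fun v' => if h : ∃ v, j v = v' then x h.choose else 0

lemma pushJ_apply (j : V → V') (hj : Function.Injective j) (x : V → ℝ) (v : V) :
    pushJ j x (j v) = x v := by
  have h : ∃ u, j u = j v := ⟨v, rfl⟩
  simp only [pushJ, dif_pos h]
  congr 1
  exact hj h.choose_spec

lemma pushJ_not (j : V → V') (x : V → ℝ) (v' : V') (h : ¬ ∃ v, j v = v') :
    pushJ j x v' = 0 := dif_neg h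

lemma affMap_eq_sum (φ : W → V → ℝ) {x : W → ℝ} {σ : Finset W}
    (h : ∀ u ∉ σ, x u = 0) (v : V) :
    affMap φ x v = ∑ u ∈ σ, x u * φ u v := by
  apply finsum_eq_sum_of_support_subset
  intro u hu
  simp only [Function.mem_support] at hu
  by_contra hus
  exact hu (by rw [h u hus, zero_mul])

lemma sum_image_inj {f : V → V'} (hf : Function.Injective f) (s : Finset V) (g : V' → ℝ) :
    ∑ v' ∈ s.image f, g v' = ∑ v ∈ s, g (f v) :=
  Finset.sum_image (fun a _ b _ h => hf h)

lemma sum_eq_one_of_mem {K : SComplex V} {x : V → ℝ} (hx : x ∈ K.realization)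
    {τ : Finset V} (hτ : ∀ v ∉ τ, x v = 0) : ∑ v ∈ τ, x v = 1 := by
  obtain ⟨σ, -, -, hsupp, hsum⟩ := hx
  calc ∑ v ∈ τ, x v = ∑ v ∈ τ ∪ σ, x v :=
        Finset.sum_subset Finset.subset_union_left (fun v _ hv => hτ v hv)
    _ = ∑ v ∈ σ, x v :=
        (Finset.sum_subset Finset.subset_union_right (fun v _ hv => hsupp v hv)).symm
    _ = 1 := hsum

lemma nonneg_of_mem {K : SComplex V} {x : V → ℝ} (hx : x ∈ K.realization) (v : V) :
    0 ≤ x v := hx.choose_spec.2.1 v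

lemma geomSimplex_nonempty {K : SComplex V} {σ : Finset V} (hσ : σ ∈ K.faces) :
    ∃ z, z ∈ K.geomSimplex σ := by
  have hne : σ.Nonempty := Finset.nonempty_iff_ne_empty.2 (fun h => K.not_empty_mem (h ▸ hσ))
  have hcard : (0 : ℝ) < σ.card := by exact_mod_cast Finset.card_pos.2 hne
  refine ⟨fun v => if v ∈ σ then ((σ.card : ℝ))⁻¹ else 0, ⟨⟨σ, hσ, ?_, ?_, ?_⟩, ?_⟩⟩
  · intro v
    show 0 ≤ if v ∈ σ then ((σ.card : ℝ))⁻¹ else 0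
    split
    · positivity
    · exact le_rfl
  · intro v hv
    show (if v ∈ σ then ((σ.card : ℝ))⁻¹ else 0) = 0
    exact if_neg hv
  · show ∑ v ∈ σ, (if v ∈ σ then ((σ.card : ℝ))⁻¹ else 0) = 1
    rw [Finset.sum_congr rfl (fun v hv => if_pos hv), Finset.sum_const, nsmul_eq_mul]
    exact mul_inv_cancel₀ hcard.ne'
  · intro v hv
    show (if v ∈ σ then ((σ.card : ℝ))⁻¹ else 0) = 0
    exact if_neg hv

/-- Pushforward of a complex along an injection. -/
def pushC (j : V → V') (K : SComplex V) : SComplex V' where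
  faces := (Finset.image j) '' K.faces
  not_empty_mem := by
    rintro ⟨σ, hσ, h⟩
    exact K.not_empty_mem (Finset.image_eq_empty.mp h ▸ hσ)
  down_closed := by
    rintro s t ⟨σ, hσ, rfl⟩ hts ht
    obtain ⟨u, hu, rfl⟩ := Finset.subset_image_iff.mp hts
    exact ⟨u, K.down_closed hσ hu ht.of_image, rfl⟩

lemma pushJ_supp {j : V → V'} {z : V → ℝ} {τ : Finset V}
    (hs : ∀ v ∉ τ, z v = 0) : ∀ v' ∉ τ.image j, pushJ j z v' = 0 := by
  intro v' hv'
  unfold pushJ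
  split
  · next h =>
    refine hs _ (fun hmem => hv' ?_)
    exact h.choose_spec ▸ Finset.mem_image_of_mem j hmem
  · rfl

lemma pushJ_mem_real {C : SComplex V} {C' : SComplex V'} {j : V → V'}
    (hj : Function.Injective j) (hface : C'.faces = (Finset.image j) '' C.faces)
    {x : V → ℝ} (hx : x ∈ C.realization) : pushJ j x ∈ C'.realization := by
  obtain ⟨σ, hσ, hnn, hsupp, hsum⟩ := hx
  refine ⟨σ.image j, hface ▸ ⟨σ, hσ, rfl⟩, ?_, pushJ_supp hsupp, ?_⟩
  · intro v'
    unfold pushJ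
    split
    · exact hnn _
    · exact le_rfl
  · rw [sum_image_inj hj, Finset.sum_congr rfl (fun v _ => pushJ_apply j hj x v)]
    exact hsum

lemma real_eq_pushJ_image {C : SComplex V} {C' : SComplex V'} {j : V → V'}
    (hj : Function.Injective j) (hface : C'.faces = (Finset.image j) '' C.faces) :
    C'.realization = pushJ j '' C.realization := by
  ext x'
  constructor
  · rintro ⟨σ', hσ', hnn, hsupp, hsum⟩
    rw [hface] at hσ'
    obtain ⟨σ, hσ, rfl⟩ := hσ'
    refine ⟨x' ∘ j, ⟨σ, hσ, fun v => hnn _, ?_, ?_⟩, ?_⟩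
    · intro v hv
      exact hsupp _ (fun hmem => hv (by
        obtain ⟨u, hu, hju⟩ := Finset.mem_image.mp hmem
        exact hj hju ▸ hu))
    · rw [show (∑ v ∈ σ, (x' ∘ j) v) = ∑ v' ∈ σ.image j, x' v' from (sum_image_inj hj σ x').symm]
      exact hsum
    · funext v'
      by_cases h : ∃ v, j v = v'
      · obtain ⟨v, rfl⟩ := h
        exact pushJ_apply j hj _ v
      · rw [pushJ_not _ _ _ h]
        refine (hsupp _ (fun hmem => h ?_)).symm
        obtain ⟨u, -, hju⟩ := Finset.mem_image.mp hmem
        exact ⟨u, hju⟩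
  · rintro ⟨x, hx, rfl⟩
    exact pushJ_mem_real hj hface hx

lemma affMap_pushJ (ψ : B → V → ℝ) (j : V → V') (hj : Function.Injective j)
    (x : B → ℝ) : affMap (fun b => pushJ j (ψ b)) x = pushJ j (affMap ψ x) := by
  funext v'
  by_cases h : ∃ v, j v = v'
  · obtain ⟨v, rfl⟩ := h
    rw [pushJ_apply j hj]
    refine finsum_congr fun b => ?_
    show x b * pushJ j (ψ b) (j v) = x b * ψ b v
    rw [pushJ_apply j hj]
  · rw [pushJ_not _ _ _ h]
    unfold affMap
    rw [finsum_congr fun b => show x b * pushJ j (ψ b) v' = 0 by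
      rw [pushJ_not _ _ _ h, mul_zero]]
    exact finsum_zero

lemma pushJ_injective {j : V → V'} (hj : Function.Injective j) :
    Function.Injective (pushJ j) := by
  intro x y hxy
  funext v
  have := congrFun hxy (j v)
  rwa [pushJ_apply j hj, pushJ_apply j hj] at this

lemma IsSubdivisionVia.push {L : SComplex B} {ψ : B → V → ℝ} {C : SComplex V}
    (h : L.IsSubdivisionVia ψ C) {j : V → V'} (hj : Function.Injective j)
    {C' : SComplex V'} (hface : C'.faces = (Finset.image j) '' C.faces) :
    L.IsSubdivisionVia (fun b => pushJ j (ψ b)) C' := by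
  have hreal := real_eq_pushJ_image (C := C) hj hface
  constructor
  · refine ⟨?_, ?_, ?_⟩
    · intro x hx
      rw [affMap_pushJ ψ j hj, hreal]
      exact ⟨_, h.1.mapsTo hx, rfl⟩
    · intro x hx y hy hxy
      rw [affMap_pushJ ψ j hj, affMap_pushJ ψ j hj] at hxy
      exact h.1.injOn hx hy (pushJ_injective hj hxy)
    · intro x' hx'
      rw [hreal] at hx'
      obtain ⟨x, hx, rfl⟩ := hx'
      obtain ⟨y, hy, rfl⟩ := h.1.surjOn hx
      exact ⟨y, hy, affMap_pushJ ψ j hj y⟩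
  · intro σ hσ
    obtain ⟨τ, hτ, himg⟩ := h.2 σ hσ
    refine ⟨τ.image j, hface ▸ ⟨τ, hτ, rfl⟩, ?_⟩
    rintro _ ⟨y, hy, rfl⟩
    have hz : affMap ψ y ∈ C.geomSimplex τ := himg ⟨y, hy, rfl⟩
    rw [affMap_pushJ ψ j hj]
    exact ⟨hreal ▸ ⟨_, hz.1, rfl⟩, pushJ_supp hz.2⟩

/-- The cone over a complex, with a genuinely new vertex (`none`). -/
def coneO (K : SComplex A) : SComplex (Option A) := coneC none (pushC some K)

lemma coneO_faces (K : SComplex A) :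
    (coneO K).faces = coneFaces none ((Finset.image some) '' K.faces) := rfl

lemma affMap_coneO (p : V → ℝ) (φ : A → V → ℝ) {x : Option A → ℝ} {τ : Finset A}
    (hx : ∀ a ∉ τ, x (some a) = 0) (v : V) :
    affMap (fun o => Option.elim o p φ) x v
      = x none * p v + affMap φ (fun a => x (some a)) v := by
  have hnone : (none : Option A) ∉ τ.image some := by simp
  have hsome : Function.Injective (some : A → Option A) := Option.some_injective A
  rw [affMap_eq_sum (fun o => Option.elim o p φ)
      (σ := insert none (τ.image some)) ?_ v,
    affMap_eq_sum φ (σ := τ) hx v,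
    Finset.sum_insert hnone, sum_image_inj hsome]
  · rfl
  · intro o ho
    match o with
    | none => exact absurd (Finset.mem_insert_self _ _) ho
    | some a =>
      refine hx a fun ha => ho ?_
      exact Finset.mem_insert_of_mem (Finset.mem_image_of_mem _ ha)

lemma affMap_smul (φ : A → V → ℝ) {y : A → ℝ} {τ : Finset A}
    (hy : ∀ a ∉ τ, y a = 0) (c : ℝ) (v : V) :
    affMap φ (fun a => c * y a) v = c * affMap φ y v := by
  rw [affMap_eq_sum φ (σ := τ) (fun a ha => by rw [hy a ha, mul_zero]) v,
    affMap_eq_sum φ (σ := τ) hy v, Finset.mul_sum]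
  exact Finset.sum_congr rfl fun a _ => by ring

lemma coneO_real_struct {K' : SComplex A} {x : Option A → ℝ}
    (hx : x ∈ (coneO K').realization) :
    (∀ o, 0 ≤ x o) ∧
    ((x none = 1 ∧ ∀ a, x (some a) = 0) ∨
     (x none < 1 ∧ ∃ τ ∈ K'.faces, (∀ a ∉ τ, x (some a) = 0) ∧
        ∑ a ∈ τ, x (some a) = 1 - x none)) := by
  obtain ⟨σ', hσ', hnn, hsupp, hsum⟩ := hx
  have hsome : Function.Injective (some : A → Option A) := Option.some_injective A
  refine ⟨hnn, ?_⟩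
  rcases hσ' with (⟨τ, hτ, rfl⟩ | ⟨s, ⟨τ, hτ, rfl⟩, rfl⟩) | hσ'
  · have h0 : x none = 0 := hsupp none (by simp)
    refine Or.inr ⟨by rw [h0]; norm_num, τ, hτ, ?_, ?_⟩
    · intro a ha
      exact hsupp _ (fun hmem => ha (by
        obtain ⟨b, hb, hba⟩ := Finset.mem_image.mp hmem
        exact hsome hba ▸ hb))
    · rw [← sum_image_inj hsome τ x, hsum, h0]
      norm_num
  · have hnone : (none : Option A) ∉ τ.image some := by simp
    have hsupp' : ∀ a ∉ τ, x (some a) = 0 := by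
      intro a ha
      refine hsupp _ (fun hmem => ?_)
      rcases Finset.mem_insert.mp hmem with h | h
      · exact absurd h (by simp)
      · obtain ⟨b, hb, hba⟩ := Finset.mem_image.mp h
        exact ha (hsome hba ▸ hb)
    have hsum' : x none + ∑ a ∈ τ, x (some a) = 1 := by
      rw [← sum_image_inj hsome τ x, ← Finset.sum_insert hnone]
      exact hsum
    have hs0 : 0 ≤ ∑ a ∈ τ, x (some a) := Finset.sum_nonneg fun a _ => hnn _
    by_cases h1 : x none = 1
    · refine Or.inl ⟨h1, fun a => ?_⟩
      have hz : ∑ a ∈ τ, x (some a) = 0 := by rw [h1] at hsum'; linarith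
      by_cases ha : a ∈ τ
      · exact (Finset.sum_eq_zero_iff_of_nonneg fun a _ => hnn _).mp hz a ha
      · exact hsupp' a ha
    · exact Or.inr ⟨lt_of_le_of_ne (by linarith) h1, τ, hτ, hsupp', by linarith⟩
  · simp only [Set.mem_singleton_iff] at hσ'
    subst hσ'
    refine Or.inl ⟨by simpa using hsum, fun a => hsupp _ (by simp)⟩

lemma coneO_mem_mk {K' : SComplex A} {t : ℝ} {y : A → ℝ} {τ : Finset A}
    (hτ : τ ∈ K'.faces) (ht0 : 0 ≤ t) (hy0 : ∀ a, 0 ≤ y a) (hsupp : ∀ a ∉ τ, y a = 0)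
    (hsum : t + ∑ a ∈ τ, y a = 1) :
    (fun o => Option.elim o t y) ∈ (coneO K').realization := by
  have hsome : Function.Injective (some : A → Option A) := Option.some_injective A
  have hnone : (none : Option A) ∉ τ.image some := by simp
  refine ⟨insert none (τ.image some), Or.inl (Or.inr ⟨τ.image some, ⟨τ, hτ, rfl⟩, rfl⟩),
    ?_, ?_, ?_⟩
  · rintro (_ | a)
    · exact ht0
    · exact hy0 a
  · rintro (_ | a) ho
    · exact absurd (Finset.mem_insert_self _ _) ho
    · exact hsupp a fun ha => ho
        (Finset.mem_insert_of_mem (Finset.mem_image_of_mem _ ha))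
  · rw [Finset.sum_insert hnone, sum_image_inj hsome]
    exact hsum

lemma coneO_mem_apex (K' : SComplex A) :
    (fun o => Option.elim o (1 : ℝ) (fun _ => 0)) ∈ (coneO K').realization := by
  refine ⟨{none}, Or.inr rfl, ?_, ?_, by simp⟩
  · rintro (_ | a) <;> norm_num
  · rintro (_ | a) ho
    · exact absurd (Finset.mem_singleton_self _) ho
    · rfl

end SComplex

namespace SComplex

variable {V V' A B : Type*}

lemma phi_decomp {K' : SComplex A} {φ : A → V → ℝ} {K : SComplex V} (p : V → ℝ)
    (hsub : K'.IsSubdivisionVia φ K) {x : Option A → ℝ}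
    (hx : x ∈ (coneO K').realization) :
    ((∀ a, x (some a) = 0) ∧ x none = 1 ∧
       ∀ v, affMap (fun o => Option.elim o p φ) x v = p v) ∨
    (0 ≤ x none ∧ x none < 1 ∧ ∃ τ ∈ K'.faces,
       (fun a => x (some a) / (1 - x none)) ∈ K'.geomSimplex τ ∧
       ∀ v, affMap (fun o => Option.elim o p φ) x v
          = x none * p v
            + (1 - x none) * affMap φ (fun a => x (some a) / (1 - x none)) v) := by
  obtain ⟨hnn, hstr⟩ := coneO_real_struct hx
  rcases hstr with ⟨h1, h0⟩ | ⟨h1, τ, hτ, hsupp, hsum⟩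
  · refine Or.inl ⟨h0, h1, fun v => ?_⟩
    rw [affMap_coneO p φ (τ := ∅) (fun a _ => h0 a) v, h1, one_mul,
      affMap_eq_sum φ (σ := (∅ : Finset A)) (fun a _ => h0 a) v,
      Finset.sum_empty, add_zero]
  · have h1t : (0:ℝ) < 1 - x none := by linarith
    refine Or.inr ⟨hnn none, h1, τ, hτ, ⟨⟨τ, hτ, ?_, ?_, ?_⟩, ?_⟩, fun v => ?_⟩
    · intro a
      exact div_nonneg (hnn _) h1t.le
    · intro a ha
      show x (some a) / (1 - x none) = 0
      rw [hsupp a ha, zero_div]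
    · rw [← Finset.sum_div, hsum, div_self h1t.ne']
    · intro a ha
      show x (some a) / (1 - x none) = 0
      rw [hsupp a ha, zero_div]
    · rw [affMap_coneO p φ (τ := τ) hsupp v]
      congr 1
      have heq : (fun a => x (some a)) = fun a => (1 - x none) * (x (some a) / (1 - x none)) := by
        funext a
        rw [← mul_div_assoc, mul_div_cancel_left₀ _ h1t.ne']
      rw [heq, affMap_smul φ (τ := τ) (fun a ha => by rw [hsupp a ha, zero_div]) (1 - x none) v]

/-- Abstract cone subdivision lemma: if `K'` subdivides `K` via `φ`, and `C` is a
"geometric cone" over `K` with apex `p`, then the simplicial cone `coneO K'`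
subdivides `C`. -/
lemma cone_subdivision {K' : SComplex A} {φ : A → V → ℝ} {K C : SComplex V} {p : V → ℝ}
    (hsub : K'.IsSubdivisionVia φ K)
    (hconeF : ∀ τ ∈ K.faces, ∃ ρ ∈ C.faces, ∀ t : ℝ, 0 ≤ t → t ≤ 1 →
        ∀ z ∈ K.geomSimplex τ, (fun v => t * p v + (1 - t) * z v) ∈ C.geomSimplex ρ)
    (hp : p ∈ C.realization)
    (hsurj : ∀ u ∈ C.realization, u = p ∨ ∃ t : ℝ, 0 ≤ t ∧ t < 1 ∧ ∃ z ∈ K.realization,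
        u = fun v => t * p v + (1 - t) * z v)
    (h : (V → ℝ) → ℝ) (hp1 : h p = 1)
    (hh : ∀ t : ℝ, 0 ≤ t → t ≤ 1 → ∀ z ∈ K.realization,
        h (fun v => t * p v + (1 - t) * z v) = t) :
    (coneO K').IsSubdivisionVia (fun o => Option.elim o p φ) C := by
  set Ψ : Option A → V → ℝ := fun o => Option.elim o p φ with hΨ
  -- value of the height function
  have hval : ∀ {x : Option A → ℝ}, x ∈ (coneO K').realization →
      h (affMap Ψ x) = x none := by
    intro x hx
    rcases phi_decomp p hsub hx with ⟨-, h1, hΦ⟩ | ⟨ht0, ht1, τ, hτ, hgs, hΦ⟩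
    · rw [funext hΦ, hp1, h1]
    · have hz : affMap φ (fun a => x (some a) / (1 - x none)) ∈ K.realization :=
        hsub.1.mapsTo hgs.1
      rw [funext hΦ]
      exact hh _ ht0 ht1.le _ hz
  constructor
  · refine ⟨?_, ?_, ?_⟩
    · -- MapsTo
      intro x hx
      rcases phi_decomp p hsub hx with ⟨-, -, hΦ⟩ | ⟨ht0, ht1, τ, hτ, hgs, hΦ⟩
      · rw [funext hΦ]; exact hp
      · have hz : affMap φ (fun a => x (some a) / (1 - x none)) ∈ K.realization :=
          hsub.1.mapsTo hgs.1
        obtain ⟨σz, hσz, hznn, hzsupp, hzsum⟩ := hz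
        obtain ⟨ρ, hρ, hmem⟩ := hconeF σz hσz
        have := hmem (x none) ht0 ht1.le _ ⟨⟨σz, hσz, hznn, hzsupp, hzsum⟩, hzsupp⟩
        rw [funext hΦ]
        exact this.1
    · -- InjOn
      intro x hx x' hx' heq
      have hnn : x none = x' none := by
        rw [← hval hx, ← hval hx', heq]
      rcases phi_decomp p hsub hx with ⟨h0, h1, hΦ⟩ | ⟨ht0, ht1, τ, hτ, hgs, hΦ⟩ <;>
        rcases phi_decomp p hsub hx' with ⟨h0', h1', hΦ'⟩ | ⟨ht0', ht1', τ', hτ', hgs', hΦ'⟩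
      · funext o
        match o with
        | none => rw [h1, h1']
        | some a => rw [h0 a, h0' a]
      · rw [h1] at hnn; linarith
      · rw [h1'] at hnn; linarith
      · have h1t : (0:ℝ) < 1 - x none := by linarith
        rw [← hnn] at ht0' ht1' hgs' hΦ'
        have hzz : affMap φ (fun a => x (some a) / (1 - x none))
            = affMap φ (fun a => x' (some a) / (1 - x none)) := by
          funext v
          have e1 := hΦ v
          have e2 := hΦ' v
          rw [← congrFun heq v, e1] at e2
          have := add_left_cancel e2
          exact mul_left_cancel₀ h1t.ne' this
        have hy := hsub.1.injOn hgs.1 hgs'.1 hzz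
        funext o
        match o with
        | none => exact hnn
        | some a =>
          have := congrFun hy a
          calc x (some a) = x (some a) / (1 - x none) * (1 - x none) :=
                (div_mul_cancel₀ _ h1t.ne').symm
            _ = x' (some a) / (1 - x none) * (1 - x none) := by rw [this]
            _ = x' (some a) := div_mul_cancel₀ _ h1t.ne'
    · -- SurjOn
      intro u hu
      rcases hsurj u hu with hup | ⟨t, ht0, ht1, z, hz, rfl⟩
      · refine ⟨fun o => Option.elim o 1 fun _ => 0, coneO_mem_apex K', ?_⟩
        funext v
        rw [hup]
        rw [show affMap Ψ (fun o => Option.elim o 1 fun _ => 0) v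
            = (fun o => Option.elim o (1:ℝ) fun _ => 0) none * p v
              + affMap φ (fun a => (fun o => Option.elim o (1:ℝ) fun _ => 0) (some a)) v from
          affMap_coneO p φ (τ := ∅) (fun a _ => rfl) v]
        simp only [Option.elim]
        rw [affMap_eq_sum φ (σ := (∅ : Finset A)) (fun a _ => rfl) v, Finset.sum_empty,
          one_mul, add_zero]
      · obtain ⟨y, hy, hyz⟩ := hsub.1.surjOn hz
        obtain ⟨τ, hτ, hynn, hysupp, hysum⟩ := hy
        have h1t : (0:ℝ) < 1 - t := by linarith
        refine ⟨fun o => Option.elim o t fun a => (1 - t) * y a, ?_, ?_⟩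
        · refine coneO_mem_mk hτ ht0 (fun a => mul_nonneg h1t.le (hynn _)) ?_ ?_
          · intro a ha
            rw [hysupp a ha, mul_zero]
          · rw [← Finset.mul_sum, hysum, mul_one]
            ring
        · funext v
          rw [show affMap Ψ (fun o => Option.elim o t fun a => (1 - t) * y a) v
              = t * p v + affMap φ (fun a => (1 - t) * y a) v from
            affMap_coneO p φ (τ := τ)
              (fun a ha => show (1 - t) * y a = 0 by rw [hysupp a ha, mul_zero]) v]
          rw [affMap_smul φ (τ := τ) hysupp (1 - t) v, hyz]
  · -- simplexwise condition
    have main : ∀ τ ∈ K'.faces, ∃ ρ ∈ C.faces, ∀ x,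
        x ∈ (coneO K').realization → (∀ a ∉ τ, x (some a) = 0) →
        affMap Ψ x ∈ C.geomSimplex ρ := by
      intro τ hτ
      obtain ⟨ρK, hρK, himg⟩ := hsub.2 τ hτ
      obtain ⟨ρ, hρ, hmem⟩ := hconeF ρK hρK
      refine ⟨ρ, hρ, fun x hx hxsupp => ?_⟩
      rcases phi_decomp p hsub hx with ⟨h0, h1, hΦ⟩ | ⟨ht0, ht1, τ₂, hτ₂, hgs, hΦ⟩
      · obtain ⟨z₀, hz₀⟩ := geomSimplex_nonempty hρK
        have := hmem 1 zero_le_one le_rfl z₀ hz₀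
        have hpeq : p = fun v => (1:ℝ) * p v + (1 - 1) * z₀ v := by
          funext v; ring
        rw [funext hΦ, hpeq]
        exact this
      · have hygs : (fun a => x (some a) / (1 - x none)) ∈ K'.geomSimplex τ := by
          refine ⟨hgs.1, fun a ha => ?_⟩
          show x (some a) / (1 - x none) = 0
          rw [hxsupp a ha, zero_div]
        have hz : affMap φ (fun a => x (some a) / (1 - x none)) ∈ K.geomSimplex ρK :=
          himg ⟨_, hygs, rfl⟩
        have := hmem (x none) ht0 ht1.le _ hz
        rw [funext hΦ]
        exact this
    intro σ' hσ'
    rcases hσ' with (⟨τ, hτ, rfl⟩ | ⟨s, ⟨τ, hτ, rfl⟩, rfl⟩) | hσ'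
    · obtain ⟨ρ, hρ, hρmem⟩ := main τ hτ
      refine ⟨ρ, hρ, ?_⟩
      rintro _ ⟨x, hx, rfl⟩
      refine hρmem x hx.1 fun a ha => hx.2 _ fun hmem => ha ?_
      obtain ⟨b, hb, hba⟩ := Finset.mem_image.mp hmem
      exact (Option.some_injective A) hba ▸ hb
    · obtain ⟨ρ, hρ, hρmem⟩ := main τ hτ
      refine ⟨ρ, hρ, ?_⟩
      rintro _ ⟨x, hx, rfl⟩
      refine hρmem x hx.1 fun a ha => hx.2 _ fun hmem => ?_
      rcases Finset.mem_insert.mp hmem with hcon | hcon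
      · exact absurd hcon (by simp)
      · obtain ⟨b, hb, hba⟩ := Finset.mem_image.mp hcon
        exact ha ((Option.some_injective A) hba ▸ hb)
    · simp only [Set.mem_singleton_iff] at hσ'
      subst hσ'
      obtain ⟨σp, hσp, hpnn, hpsupp, hpsum⟩ := hp
      refine ⟨σp, hσp, ?_⟩
      rintro _ ⟨x, hx, rfl⟩
      have hx0 : ∀ a, x (some a) = 0 := fun a => hx.2 _ (by simp)
      rcases phi_decomp p hsub hx.1 with ⟨h0, h1, hΦ⟩ | ⟨ht0, ht1, τ₂, hτ₂, hgs, hΦ⟩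
      · rw [funext hΦ]
        exact ⟨⟨σp, hσp, hpnn, hpsupp, hpsum⟩, hpsupp⟩
      · exfalso
        obtain ⟨σy, -, -, -, hys⟩ := hgs.1
        have : ∑ a ∈ σy, x (some a) / (1 - x none) = 0 :=
          Finset.sum_eq_zero fun a _ => by rw [hx0 a, zero_div]
        rw [hys] at this
        linarith

end SComplex

namespace SComplex

variable {V V' A B : Type*}

lemma real_w_zero {K : SComplex V} {w : V} (hw : ∀ σ ∈ K.faces, w ∉ σ)
    {z : V → ℝ} (hz : z ∈ K.realization) : z w = 0 := by
  obtain ⟨σ, hσ, -, hsupp, -⟩ := hz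
  exact hsupp w (hw σ hσ)

/-- Cone subdivision where the cone apex is a genuinely new vertex `w`. -/
lemma cone_subdivision_fresh {K' : SComplex A} {φ : A → V → ℝ} {K C : SComplex V} {w : V}
    (hsub : K'.IsSubdivisionVia φ K)
    (hw : ∀ σ ∈ K.faces, w ∉ σ)
    (hC : C.faces = coneFaces w K.faces) :
    (coneO K').IsSubdivisionVia
      (fun o => Option.elim o (fun v => if v = w then 1 else 0) φ) C := by
  set p : V → ℝ := fun v => if v = w then 1 else 0 with hp_def
  have hp_w : p w = 1 := if_pos rfl
  have hp_ne : ∀ v, v ≠ w → p v = 0 := fun v hv => if_neg hv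
  have hp_nn : ∀ v, 0 ≤ p v := by
    intro v
    by_cases hv : v = w
    · rw [hv, hp_w]; norm_num
    · rw [hp_ne v hv]
  refine cone_subdivision hsub ?_ ?_ ?_ (fun u => u w) hp_w ?_
  · -- hconeF
    intro τ hτ
    have hwτ : w ∉ τ := hw τ hτ
    refine ⟨insert w τ, hC ▸ Or.inl (Or.inr ⟨τ, hτ, rfl⟩), ?_⟩
    intro t ht0 ht1 z hz
    have hznn : ∀ v, 0 ≤ z v := nonneg_of_mem hz.1
    have hzw : z w = 0 := real_w_zero hw hz.1
    have hsupp : ∀ v ∉ insert w τ, t * p v + (1 - t) * z v = 0 := by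
      intro v hv
      have hvw : v ≠ w := fun h => hv (h ▸ Finset.mem_insert_self w τ)
      have hvτ : v ∉ τ := fun h => hv (Finset.mem_insert_of_mem h)
      rw [hp_ne v hvw, hz.2 v hvτ, mul_zero, mul_zero, add_zero]
    refine ⟨⟨insert w τ, hC ▸ Or.inl (Or.inr ⟨τ, hτ, rfl⟩), ?_, hsupp, ?_⟩, hsupp⟩
    · intro v
      exact add_nonneg (mul_nonneg ht0 (hp_nn v)) (mul_nonneg (by linarith) (hznn v))
    · rw [Finset.sum_insert hwτ, hp_w, hzw]
      have : ∀ v ∈ τ, t * p v + (1 - t) * z v = (1 - t) * z v := by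
        intro v hv
        rw [hp_ne v (fun h => hwτ (h ▸ hv)), mul_zero, zero_add]
      rw [Finset.sum_congr rfl this, ← Finset.mul_sum,
        sum_eq_one_of_mem hz.1 hz.2, mul_one, mul_zero]
      ring
  · -- hp
    refine ⟨{w}, hC ▸ Or.inr rfl, hp_nn, ?_, ?_⟩
    · intro v hv
      exact hp_ne v (Finset.notMem_singleton.mp hv)
    · rw [Finset.sum_singleton, hp_w]
  · -- hsurj
    intro u hu
    obtain ⟨σ', hσ', hnn, hsupp, hsum⟩ := hu
    rw [hC] at hσ'
    rcases hσ' with (hσK | ⟨τ, hτ, rfl⟩) | hσ'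
    · refine Or.inr ⟨0, le_rfl, by norm_num, u, ⟨σ', hσK, hnn, hsupp, hsum⟩, ?_⟩
      funext v; ring
    · have hwτ : w ∉ τ := hw τ hτ
      have hsum' : u w + ∑ v ∈ τ, u v = 1 := by rw [← Finset.sum_insert hwτ]; exact hsum
      have hτnn : 0 ≤ ∑ v ∈ τ, u v := Finset.sum_nonneg fun v _ => hnn v
      by_cases ht : u w = 1
      · refine Or.inl ?_
        funext v
        by_cases hvw : v = w
        · rw [hvw, ht, hp_w]
        · rw [hp_ne v hvw]
          by_cases hvτ : v ∈ τ
          · have hzero : ∑ v ∈ τ, u v = 0 := by rw [ht] at hsum'; linarith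
            exact (Finset.sum_eq_zero_iff_of_nonneg fun v _ => hnn v).mp hzero v hvτ
          · exact hsupp v (by
              intro hmem
              rcases Finset.mem_insert.mp hmem with h | h
              exacts [hvw h, hvτ h])
      · have htlt : u w < 1 := lt_of_le_of_ne (by linarith) ht
        have h1t : (0:ℝ) < 1 - u w := by linarith
        refine Or.inr ⟨u w, hnn w, htlt,
          fun v => if v = w then 0 else u v / (1 - u w), ?_, ?_⟩
        · refine ⟨τ, hτ, ?_, ?_, ?_⟩
          · intro v
            show 0 ≤ if v = w then 0 else u v / (1 - u w)
            split
            · exact le_rfl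
            · exact div_nonneg (hnn v) h1t.le
          · intro v hv
            show (if v = w then 0 else u v / (1 - u w)) = 0
            split
            · rfl
            · next hvw =>
              rw [hsupp v (by
                intro hmem
                rcases Finset.mem_insert.mp hmem with h | h
                exacts [hvw h, hv h]), zero_div]
          · have : ∀ v ∈ τ, (if v = w then 0 else u v / (1 - u w)) = u v / (1 - u w) := by
              intro v hv
              rw [if_neg (fun h : v = w => hwτ (h ▸ hv))]
            rw [Finset.sum_congr rfl this, ← Finset.sum_div]
            rw [show ∑ v ∈ τ, u v = 1 - u w by linarith]
            exact div_self h1t.ne'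
        · funext v
          by_cases hvw : v = w
          · subst hvw
            show u v = u v * p v + (1 - u v) * (if v = v then 0 else u v / (1 - u v))
            rw [hp_w, if_pos rfl]
            ring
          · show u v = u w * p v + (1 - u w) * (if v = w then 0 else u v / (1 - u w))
            rw [hp_ne v hvw, if_neg hvw]
            rw [← mul_div_assoc, mul_div_cancel_left₀ _ h1t.ne']
            ring
    · simp only [Set.mem_singleton_iff] at hσ'
      subst hσ'
      refine Or.inl ?_
      funext v
      by_cases hvw : v = w
      · subst hvw
        rw [hp_w]
        simpa using hsum
      · rw [hp_ne v hvw, hsupp v (fun h => hvw (Finset.mem_singleton.mp h))]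
  · -- hh
    intro t ht0 ht1 z hz
    show t * p w + (1 - t) * z w = t
    rw [hp_w, real_w_zero hw hz]
    ring

lemma some_mem_image {τ : Finset A} {a : A} (h : some a ∈ τ.image (some : A → Option A)) :
    a ∈ τ := by
  obtain ⟨b, hb, hba⟩ := Finset.mem_image.mp h
  exact (Option.some_injective A) hba ▸ hb

lemma coneO_iso {K' : SComplex A} {L' : SComplex B} {f : A → B}
    (hf : IsIsoMap f K' L') :
    IsIsoMap (Option.map f) (coneO K') (coneO L') := by
  have hsomeA : Function.Injective (some : A → Option A) := Option.some_injective A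
  have hsomeB : Function.Injective (some : B → Option B) := Option.some_injective B
  have hmapsome : ∀ (τ : Finset A),
      (τ.image some).image (Option.map f) = (τ.image f).image some := by
    intro τ
    rw [Finset.image_image, Finset.image_image]
    rfl
  refine ⟨?_, ?_, ?_⟩
  · -- InjOn on vertex set
    intro o ho o' ho' heq
    match o, o' with
    | none, none => rfl
    | none, some a => exact absurd heq (by simp)
    | some a, none => exact absurd heq (by simp)
    | some a, some a' =>
      have hvx : ∀ {b : A}, some b ∈ (coneO K').vertexSet → b ∈ K'.vertexSet := by
        intro b hb
        have hb' : ({some b} : Finset (Option A)) ∈ (coneO K').faces := hb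
        rcases hb' with (⟨τ, hτ, hτeq⟩ | ⟨s, ⟨τ, hτ, rfl⟩, hseq⟩) | hb'
        · have : τ = {b} := Finset.image_injective hsomeA
            (hτeq.trans (Finset.image_singleton some b).symm)
          show ({b} : Finset A) ∈ K'.faces
          exact this ▸ hτ
        · exact absurd (hseq ▸ Finset.mem_insert_self none _)
            (by simp)
        · exact absurd hb' (by simp)
      have := hf.1 (hvx ho) (hvx ho')
        (hsomeB (by simpa [Option.map] using heq))
      rw [this]
  · -- faces map into faces
    intro σ hσ
    rcases hσ with (⟨τ, hτ, rfl⟩ | ⟨s, ⟨τ, hτ, rfl⟩, rfl⟩) | hσ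
    · exact Or.inl (Or.inl ⟨τ.image f, hf.2.1 τ hτ, (hmapsome τ).symm⟩)
    · rw [Finset.image_insert]
      exact Or.inl (Or.inr ⟨(τ.image f).image some,
        ⟨τ.image f, hf.2.1 τ hτ, rfl⟩, by rw [hmapsome τ]; rfl⟩)
    · simp only [Set.mem_singleton_iff] at hσ
      subst hσ
      rw [Finset.image_singleton]
      exact Or.inr rfl
  · -- surjectivity onto faces
    intro ρ' hρ'
    rcases hρ' with (⟨ρ, hρ, rfl⟩ | ⟨s, ⟨ρ, hρ, rfl⟩, rfl⟩) | hρ'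
    · obtain ⟨τ, hτ, hτρ⟩ := hf.2.2 ρ hρ
      exact ⟨τ.image some, Or.inl (Or.inl ⟨τ, hτ, rfl⟩), by rw [hmapsome τ, hτρ]⟩
    · obtain ⟨τ, hτ, hτρ⟩ := hf.2.2 ρ hρ
      refine ⟨insert none (τ.image some), Or.inl (Or.inr ⟨τ.image some, ⟨τ, hτ, rfl⟩, rfl⟩), ?_⟩
      rw [Finset.image_insert, hmapsome τ, hτρ]
      rfl
    · simp only [Set.mem_singleton_iff] at hρ'
      subst hρ'
      exact ⟨{none}, Or.inr rfl, by rw [Finset.image_singleton]; rfl⟩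

end SComplex

/-- The full simplex on a vertex type: all nonempty finite subsets. -/
def fullC (T : Type*) : SComplex T where
  faces := {σ | σ.Nonempty}
  not_empty_mem := by simp [Set.mem_setOf_eq]
  down_closed := fun _ _ h => h

namespace SComplex

variable {V A B : Type*}

lemma image_some_eraseNone {T : Type*} (σ : Finset (Option T)) :
    σ.eraseNone.image some = σ.erase none := by
  ext o
  cases o with
  | none => simp
  | some a => simp [Finset.mem_eraseNone]

lemma full_option_faces {T : Type*} (K : SComplex T)
    (hK : K.faces = {σ : Finset T | σ.Nonempty}) :
    {σ : Finset (Option T) | σ.Nonempty}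
      = coneFaces none ((Finset.image some) '' K.faces) := by
  ext σ
  constructor
  · intro hσ
    have hσne : σ.Nonempty := hσ
    by_cases hn : none ∈ σ
    · by_cases he : σ.eraseNone.Nonempty
      · refine Or.inl (Or.inr ⟨σ.eraseNone.image some, ⟨σ.eraseNone, hK ▸ he, rfl⟩, ?_⟩)
        rw [image_some_eraseNone, Finset.insert_erase hn]
      · have hsub : σ ⊆ {none} := by
          intro o ho
          match o with
          | none => exact Finset.mem_singleton_self none
          | some a => exact absurd ⟨a, Finset.mem_eraseNone.mpr ho⟩ he
        have : σ = {none} := Finset.Subset.antisymm hsub (Finset.singleton_subset_iff.mpr hn)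
        exact Or.inr (this ▸ rfl)
    · refine Or.inl (Or.inl ⟨σ.eraseNone, hK ▸ ?_, ?_⟩)
      · obtain ⟨o, ho⟩ := hσne
        match o with
        | none => exact absurd ho hn
        | some a => exact ⟨a, Finset.mem_eraseNone.mpr ho⟩
      · rw [image_some_eraseNone, Finset.erase_eq_self.mpr hn]
  · rintro ((⟨τ, hτ, rfl⟩ | ⟨s, ⟨τ, hτ, rfl⟩, rfl⟩) | hσ)
    · have : τ.Nonempty := by rw [hK] at hτ; exact hτ
      exact this.image some
    · exact Finset.insert_nonempty _ _
    · simp only [Set.mem_singleton_iff] at hσ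
      subst hσ
      exact Finset.singleton_nonempty none

lemma stdFaces_eq (n : ℕ) :
    (stdSimplexC (n+1)).faces
      = (Finset.image ⇑(finSuccEquiv (n+1)).symm) '' (fullC (Option (Fin (n+1)))).faces := by
  ext σ
  constructor
  · intro hσ
    have hσne : σ.Nonempty := hσ
    refine ⟨σ.image ⇑(finSuccEquiv (n+1)), hσne.image _, ?_⟩
    rw [Finset.image_image,
      show ⇑(finSuccEquiv (n+1)).symm ∘ ⇑(finSuccEquiv (n+1)) = id from
        funext fun x => (finSuccEquiv (n+1)).symm_apply_apply x,
      Finset.image_id]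
  · rintro ⟨s, hs, rfl⟩
    have hsne : s.Nonempty := hs
    exact hsne.image _

/-- Cone of a subdivision of `Δ^d` is a subdivision of `Δ^{d+1}`. -/
lemma subdiv_std_succ {d : ℕ} {L' : SComplex B} {ψ : B → (Fin (d+1)) → ℝ}
    (hL : L'.IsSubdivisionVia ψ (stdSimplexC d)) :
    ∃ ψ' : Option B → (Fin (d+2)) → ℝ,
      (coneO L').IsSubdivisionVia ψ' (stdSimplexC (d+1)) := by
  have hsome : Function.Injective (some : Fin (d+1) → Option (Fin (d+1))) :=
    Option.some_injective _
  have h1 : L'.IsSubdivisionVia (fun b => pushJ some (ψ b))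
      (pushC some (stdSimplexC d)) := hL.push hsome rfl
  have hw : ∀ σ ∈ (pushC some (stdSimplexC d)).faces, (none : Option (Fin (d+1))) ∉ σ := by
    rintro σ ⟨τ, hτ, rfl⟩ hmem
    obtain ⟨b, -, hb⟩ := Finset.mem_image.mp hmem
    exact absurd hb (by simp)
  have hC : (fullC (Option (Fin (d+1)))).faces
      = coneFaces none (pushC some (stdSimplexC d)).faces := by
    have := full_option_faces (stdSimplexC d) rfl
    exact this
  have h2 := cone_subdivision_fresh h1 hw hC
  have h3 := h2.push (j := ⇑(finSuccEquiv (d+1)).symm)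
    (finSuccEquiv (d+1)).symm.injective (stdFaces_eq d)
  exact ⟨_, h3⟩

/-- The cone over a subdivision of `∂Δ^d`, with apex placed at the barycenter,
is a subdivision of `Δ^d`. -/
lemma subdiv_boundary_cone {d : ℕ} {L' : SComplex B} {ψ : B → (Fin (d+1)) → ℝ}
    (hL : L'.IsSubdivisionVia ψ (boundaryC (d+1))) :
    (coneO L').IsSubdivisionVia
      (fun o => Option.elim o (fun _ => ((d:ℝ)+1)⁻¹) ψ) (stdSimplexC d) := by
  have hd : (0:ℝ) < (d:ℝ)+1 := by positivity
  set c : ℝ := ((d:ℝ)+1)⁻¹ with hc_def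
  have hc_nn : 0 ≤ c := inv_nonneg.mpr hd.le
  have hdc : ((d:ℝ)+1) * c = 1 := mul_inv_cancel₀ hd.ne'
  have huniv : (Finset.univ : Finset (Fin (d+1))).Nonempty := Finset.univ_nonempty
  have hsum_const : ∀ t : ℝ, ∑ _v : Fin (d+1), t * c = t := by
    intro t
    rw [Finset.sum_const, Finset.card_univ, Fintype.card_fin, nsmul_eq_mul]
    push_cast
    calc ((d:ℝ)+1) * (t * c) = t * (((d:ℝ)+1) * c) := by ring
      _ = t := by rw [hdc, mul_one]
  -- basic facts about points of the boundary complex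
  have hbdry : ∀ z ∈ (boundaryC (d+1)).realization,
      (∀ v, 0 ≤ z v) ∧ (∑ v, z v = 1) ∧ ∃ v₀, z v₀ = 0 := by
    intro z hz
    obtain ⟨σ, hσ, hnn, hsupp, hsum⟩ := hz
    have hσ' : σ.Nonempty ∧ σ ≠ Finset.univ := hσ
    obtain ⟨hσne, hσnu⟩ := hσ' 
    refine ⟨hnn, sum_eq_one_of_mem ⟨σ, hσ, hnn, hsupp, hsum⟩
      (fun v hv => absurd (Finset.mem_univ v) hv), ?_⟩
    have : ∃ v₀, v₀ ∉ σ := by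
      by_contra hcon
      push_neg at hcon
      exact hσnu (Finset.eq_univ_iff_forall.mpr hcon)
    obtain ⟨v₀, hv₀⟩ := this
    exact ⟨v₀, hsupp v₀ hv₀⟩
  refine cone_subdivision hL ?_ ?_ ?_
    (fun u => ((d:ℝ)+1) * Finset.univ.inf' huniv u) ?_ ?_
  · -- hconeF
    intro τ hτ
    refine ⟨Finset.univ, huniv, ?_⟩
    intro t ht0 ht1 z hz
    obtain ⟨hznn, hzsum, -⟩ := hbdry z hz.1
    have hvac : ∀ v : Fin (d+1), v ∉ (Finset.univ : Finset (Fin (d+1))) →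
        t * c + (1 - t) * z v = 0 := fun v hv => absurd (Finset.mem_univ v) hv
    refine ⟨⟨Finset.univ, huniv, ?_, hvac, ?_⟩, hvac⟩
    · intro v
      exact add_nonneg (mul_nonneg ht0 hc_nn) (mul_nonneg (by linarith) (hznn v))
    · rw [Finset.sum_add_distrib, hsum_const t, ← Finset.mul_sum, hzsum, mul_one]
      ring
  · -- hp
    refine ⟨Finset.univ, huniv, fun v => hc_nn, fun v hv => absurd (Finset.mem_univ v) hv, ?_⟩
    have := hsum_const 1
    simpa using this
  · -- hsurj
    intro u hu
    have hunn : ∀ v, 0 ≤ u v := nonneg_of_mem hu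
    have husum : ∑ v, u v = 1 :=
      sum_eq_one_of_mem hu (fun v hv => absurd (Finset.mem_univ v) hv)
    set c0 : ℝ := Finset.univ.inf' huniv u with hc0_def
    have hc0le : ∀ v, c0 ≤ u v := fun v => Finset.inf'_le u (Finset.mem_univ v)
    obtain ⟨v₀, -, hv₀⟩ := Finset.exists_mem_eq_inf' huniv u
    have hc0nn : 0 ≤ c0 := by rw [hc0_def, hv₀]; exact hunn v₀
    have hsumc0 : ∑ _v : Fin (d+1), c0 = ((d:ℝ)+1) * c0 := by
      rw [Finset.sum_const, Finset.card_univ, Fintype.card_fin, nsmul_eq_mul]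
      push_cast
      rfl
    have hts : ((d:ℝ)+1) * c0 ≤ 1 := by
      calc ((d:ℝ)+1) * c0 = ∑ _v : Fin (d+1), c0 := hsumc0.symm
        _ ≤ ∑ v, u v := Finset.sum_le_sum (fun v _ => hc0le v)
        _ = 1 := husum
    set t : ℝ := ((d:ℝ)+1) * c0 with ht_def
    by_cases heq : t = 1
    · refine Or.inl ?_
      have hzero : ∑ v, (u v - c0) = 0 := by
        rw [Finset.sum_sub_distrib, husum, hsumc0, heq]
        ring
      have hall : ∀ v, u v = c0 := by
        intro v
        have := (Finset.sum_eq_zero_iff_of_nonneg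
          (fun v _ => by linarith [hc0le v])).mp hzero v (Finset.mem_univ v)
        linarith
      have hc0c : c0 = c := by
        apply mul_left_cancel₀ hd.ne'
        rw [hdc, ← ht_def, heq]

      funext v
      rw [hall v, hc0c]
    · have htlt : t < 1 := lt_of_le_of_ne hts heq
      have h1t : (0:ℝ) < 1 - t := by linarith
      have ht0 : 0 ≤ t := mul_nonneg hd.le hc0nn
      refine Or.inr ⟨t, ht0, htlt, fun v => (u v - c0) / (1 - t), ?_, ?_⟩
      · -- membership in the boundary complex
        have hone : ∃ v₁, c0 < u v₁ := by
          by_contra hcon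
          push_neg at hcon
          have : ∀ v, u v = c0 := fun v => le_antisymm (hcon v) (hc0le v)
          have h1 : (1:ℝ) = t := by
            rw [← husum, Finset.sum_congr rfl (fun v _ => this v)]
            exact hsumc0
          exact heq h1.symm
        obtain ⟨v₁, hv₁⟩ := hone
        have hv₁v₀ : v₁ ≠ v₀ := fun h => by rw [h, ← hv₀] at hv₁; exact lt_irrefl _ hv₁
        refine ⟨Finset.univ.erase v₀, ⟨⟨v₁, Finset.mem_erase.mpr ⟨hv₁v₀, Finset.mem_univ v₁⟩⟩,
          (Finset.erase_ssubset (Finset.mem_univ v₀)).ne⟩, ?_, ?_, ?_⟩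
        · intro v
          show 0 ≤ (u v - c0) / (1 - t)
          exact div_nonneg (by linarith [hc0le v]) h1t.le
        · intro v hv
          show (u v - c0) / (1 - t) = 0
          have : v = v₀ := by
            by_contra hne
            exact hv (Finset.mem_erase.mpr ⟨hne, Finset.mem_univ v⟩)
          rw [this, ← hv₀, sub_self, zero_div]
        · rw [show (∑ v ∈ Finset.univ.erase v₀, (u v - c0) / (1 - t))
              = ∑ v, (u v - c0) / (1 - t) from Finset.sum_subset
                (Finset.erase_subset v₀ Finset.univ) (fun v _ hv => by
                  have : v = v₀ := by
                    by_contra hne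
                    exact hv (Finset.mem_erase.mpr ⟨hne, Finset.mem_univ v⟩)
                  rw [this, ← hv₀, sub_self, zero_div]),
            ← Finset.sum_div, Finset.sum_sub_distrib, husum, hsumc0]
          rw [show (1:ℝ) - ((d:ℝ)+1) * c0 = 1 - t from rfl]
          exact div_self h1t.ne'
      · funext v
        have htc : t * c = c0 := by
          rw [ht_def]
          calc ((d:ℝ)+1) * c0 * c = c0 * (((d:ℝ)+1) * c) := by ring
            _ = c0 := by rw [hdc, mul_one]
        show u v = t * c + (1 - t) * ((u v - c0) / (1 - t))
        rw [htc, ← mul_div_assoc, mul_div_cancel_left₀ _ h1t.ne']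
        ring
  · -- h p = 1
    show ((d:ℝ)+1) * Finset.univ.inf' huniv (fun _ => c) = 1
    rw [Finset.inf'_const, hdc]
  · -- hh
    intro t ht0 ht1 z hz
    obtain ⟨hznn, -, v₀, hv₀⟩ := hbdry z hz
    show ((d:ℝ)+1) * Finset.univ.inf' huniv (fun v => t * c + (1 - t) * z v) = t
    have hinf : Finset.univ.inf' huniv (fun v => t * c + (1 - t) * z v) = t * c := by
      apply le_antisymm
      · calc Finset.univ.inf' huniv (fun v => t * c + (1 - t) * z v)
            ≤ t * c + (1 - t) * z v₀ := Finset.inf'_le _ (Finset.mem_univ v₀)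
          _ = t * c := by rw [hv₀, mul_zero, add_zero]
      · refine Finset.le_inf' huniv _ (fun v _ => ?_)
        have : 0 ≤ (1 - t) * z v := mul_nonneg (by linarith) (hznn v)
        linarith
    rw [hinf]
    calc ((d:ℝ)+1) * (t * c) = t * (((d:ℝ)+1) * c) := by ring
      _ = t := by rw [hdc, mul_one]

end SComplex

/-- If `Mt` is obtained from `M` by `r`-starring a combinatorial
`d`-ball `D` (with boundary sphere `bD`) at the new vertex `w`, then `M` and `Mt` are
both subcomplexes of `N = M ∪ wD`, and `N` is obtained from `Mt` by an elementary PL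
expansion of dimension `d + 1`: `N = Mt ∪ wD`, where `wD` is a combinatorial
`(d+1)`-ball and `Mt ∩ wD = w∂D` is a combinatorial `d`-ball. -/
theorem starring_gives_expansion {V : Type*} (r : ℤ) (d : ℕ)
    (M Mt N D bD : SComplex V) (w : V)
    (hball : D.IsCombBall d)
    (hsphere : bD.IsCombSphereAux (d + 1))
    (hstar : SComplex.IsStarringAt r M Mt D bD d w)
    (hN : N.faces = M.faces ∪ SComplex.coneFaces w D.faces) :
    M.IsSubcomplex N ∧ Mt.IsSubcomplex N ∧
    (SComplex.coneC w D).IsCombBall (d + 1) ∧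
    N.faces = Mt.faces ∪ (SComplex.coneC w D).faces ∧
    Mt.faces ∩ (SComplex.coneC w D).faces = (SComplex.coneC w bD).faces ∧
    (SComplex.coneC w bD).IsCombBall d := by
  classical
  obtain ⟨hDM, -, -, ⟨hbDD, -⟩, hcof, hwM, hMt⟩ := hstar
  have hwM' : ∀ σ ∈ M.faces, w ∉ σ := by
    intro σ hσ hwσ
    exact hwM (M.down_closed hσ (Finset.singleton_subset_iff.mpr hwσ)
      (Finset.singleton_nonempty w))
  have hwD : ∀ σ ∈ D.faces, w ∉ σ := fun σ hσ => hwM' σ (hDM hσ)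
  have hwbD : ∀ σ ∈ bD.faces, w ∉ σ := fun σ hσ => hwD σ (hbDD hσ)
  have hmono : SComplex.coneFaces w bD.faces ⊆ SComplex.coneFaces w D.faces := by
    rintro σ ((h | ⟨τ, hτ, rfl⟩) | h)
    · exact Or.inl (Or.inl (hbDD h))
    · exact Or.inl (Or.inr ⟨τ, hbDD hτ, rfl⟩)
    · exact Or.inr h
  have hMN : M.IsSubcomplex N := by
    intro σ hσ
    rw [hN]
    exact Or.inl hσ
  have hMtN : Mt.IsSubcomplex N := by
    intro σ hσ
    rw [hMt] at hσ
    rw [hN]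
    rcases hσ with ⟨hMσ, -⟩ | hb
    · exact Or.inl hMσ
    · exact Or.inr (hmono hb)
  have hball1 : (SComplex.coneC w D).IsCombBall (d + 1) := by
    obtain ⟨A, B, K', L', φ, ψ, hK', hL', f, hf⟩ := hball
    obtain ⟨ψ', hψ'⟩ := SComplex.subdiv_std_succ hL'
    exact ⟨Option A, Option B, SComplex.coneO K', SComplex.coneO L', _, ψ',
      SComplex.cone_subdivision_fresh hK' hwD rfl, hψ', Option.map f,
      SComplex.coneO_iso hf⟩
  have hNMt : N.faces = Mt.faces ∪ (SComplex.coneC w D).faces := by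
    rw [hN, hMt]
    ext σ
    constructor
    · rintro (hMσ | hcone)
      · by_cases hX : σ ∈ {τ | τ ∈ D.faces ∧ τ ∉ bD.faces}
        · exact Or.inr (Or.inl (Or.inl hX.1))
        · exact Or.inl (Or.inl ⟨hMσ, hX⟩)
      · exact Or.inr hcone
    · rintro ((⟨h, -⟩ | hbd) | hcone)
      · exact Or.inl h
      · exact Or.inr (hmono hbd)
      · exact Or.inr hcone
  have hint : Mt.faces ∩ (SComplex.coneC w D).faces = (SComplex.coneC w bD).faces := by
    ext σ
    constructor
    · rintro ⟨hMt', hcone⟩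
      rw [hMt] at hMt'
      rcases hMt' with ⟨hMσ, hnX⟩ | hb
      · rcases hcone with (hD | ⟨τ, hτ, rfl⟩) | hcone
        · have : σ ∈ bD.faces := by
            by_contra hnb
            exact hnX ⟨hD, hnb⟩
          exact Or.inl (Or.inl this)
        · exact absurd (M.down_closed hMσ
            (Finset.singleton_subset_iff.mpr (Finset.mem_insert_self w τ))
            (Finset.singleton_nonempty w)) hwM
        · simp only [Set.mem_singleton_iff] at hcone
          subst hcone
          exact (hwM hMσ).elim
      · exact hb
    · intro hb
      refine ⟨?_, hmono hb⟩
      rw [hMt]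
      exact Or.inr hb
  have hball2 : (SComplex.coneC w bD).IsCombBall d := by
    obtain ⟨A, B, K', L', φ, ψ, hK', hL', f, hf⟩ := hsphere
    exact ⟨Option A, Option B, SComplex.coneO K', SComplex.coneO L', _, _,
      SComplex.cone_subdivision_fresh hK' hwbD rfl,
      SComplex.subdiv_boundary_cone hL', Option.map f, SComplex.coneO_iso hf⟩
  exact ⟨hMN, hMtN, hball1, hNMt, hint, hball2⟩
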